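/- Let agents have {−1,0,c}-ONSUB valuations for a positive integer c. Then every leximin allocation X is proportional up to one item (PROP1): for every agent i, either v_i(X_i) ≥ v_i(O)/n, or v_i(X_i + o) ≥ v_i(O)/n for some o ∉ X_i, or v_i(X_i − o) ≥ v_i(O)/n for some o ∈ X_i. -/

import Mathlib

open Finset

/-- A set function is submodular: `v ∅ = 0` and decreasing marginal gains. -/
def Submodular {α : Type*} [DecidableEq α] (v : Finset α → ℝ) : Prop :=
  v ∅ = 0 ∧ ∀ S T : Finset α, S ⊆ T → ∀ o ∉ T,
    v (insert o T) - v T ≤ v (insert o S) - v S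

/-- The telescoping sum vector of marginal gains along an ordering `l`. -/
def margList {α : Type*} [DecidableEq α] (v : Finset α → ℝ) (l : List α) : List ℝ :=
  (List.range l.length).map fun j =>
    v ((l.take (j + 1)).toFinset) - v ((l.take j).toFinset)

/-- The sorted (ascending) telescoping sum vector. -/
noncomputable def sortedVec {α : Type*} [DecidableEq α] (v : Finset α → ℝ) (l : List α) :
    List ℝ :=
  Multiset.sort (margList v l) (· ≤ ·)

/-- `l` is an ordering of the bundle `S`. -/
def IsOrdering {α : Type*} [DecidableEq α] (l : List α) (S : Finset α) : Prop :=
  l.Nodup ∧ l.toFinset = S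

/-- Order-neutrality: any two orderings of a bundle give the same sorted telescoping
sum vector. -/
def OrderNeutral {α : Type*} [DecidableEq α] (v : Finset α → ℝ) : Prop :=
  ∀ (S : Finset α) (l₁ l₂ : List α), IsOrdering l₁ S → IsOrdering l₂ S →
    sortedVec v l₁ = sortedVec v l₂
/-- A complete allocation: bundles are pairwise disjoint and cover all items. -/
def CompleteAlloc {α : Type*} [Fintype α] [DecidableEq α] {n : ℕ}
    (X : Fin n → Finset α) : Prop :=
  (∀ i j : Fin n, i ≠ j → Disjoint (X i) (X j)) ∧ Finset.univ.biUnion X = Finset.univ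

/-- The ascending-sorted utility vector of an allocation. -/
noncomputable def sUtil {α : Type*} [Fintype α] [DecidableEq α] {n : ℕ}
    (v : Fin n → Finset α → ℝ) (X : Fin n → Finset α) : List ℝ :=
  Multiset.sort (Multiset.map (fun i => v i (X i)) Finset.univ.val) (· ≤ ·)

/-- A leximin allocation: a complete allocation whose sorted utility vector is not
lexicographically dominated by that of any other complete allocation. -/
def Leximin {α : Type*} [Fintype α] [DecidableEq α] {n : ℕ}
    (v : Fin n → Finset α → ℝ) (X : Fin n → Finset α) : Prop :=
  CompleteAlloc X ∧ ∀ Y : Fin n → Finset α, CompleteAlloc Y →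
    ¬ List.Lex (· < ·) (sUtil v X) (sUtil v Y)

set_option linter.unusedSectionVars false
set_option linter.unusedVariables false
set_option maxHeartbeats 1000000


open Finset

set_option linter.unusedSectionVars false

section ValLemmas

variable {α : Type*} [DecidableEq α] (v : Finset α → ℝ) (c : ℕ)

variable (hsub : Submodular v) (hc : 0 < c)
variable (hv : ∀ (S : Finset α) (o : α), o ∉ S →
      v (insert o S) - v S ∈ ({-1, 0, (c : ℝ)} : Set ℝ))

include hv hc in
lemma marg_cases {S : Finset α} {o : α} (h : o ∉ S) :
    v (insert o S) - v S = -1 ∨ v (insert o S) - v S = 0 ∨ v (insert o S) - v S = c := by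
  have := hv S o h
  simpa [Set.mem_insert_iff] using this

include hv hc in
lemma marg_ge_neg_one {S : Finset α} {o : α} (h : o ∉ S) :
    -1 ≤ v (insert o S) - v S := by
  have hc1 : (1:ℝ) ≤ c := by exact_mod_cast hc
  rcases marg_cases v c hc hv h with h1 | h1 | h1 <;> linarith

include hsub in
lemma submod' {S T : Finset α} (hST : S ⊆ T) {o : α} (h : o ∉ T) :
    v (insert o T) - v T ≤ v (insert o S) - v S := hsub.2 S T hST o h

include hsub hv hc in
lemma marg_eq_c_of_subset {S T : Finset α} (hST : S ⊆ T) {o : α} (h : o ∉ T)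
    (hT : v (insert o T) - v T = c) :
    v (insert o S) - v S = c := by
  have h1 : (c:ℝ) ≤ v (insert o S) - v S := by
    rw [← hT]; exact submod' v hsub hST h
  have hc1 : (1:ℝ) ≤ c := by exact_mod_cast hc
  rcases marg_cases v c hc hv (fun hS => h (hST hS)) with h2 | h2 | h2 <;> linarith

include hv hc in
lemma neg_absorb (X : Finset α) (A : Finset α) :
    v X - A.card ≤ v (X ∪ A) := by
  classical
  induction A using Finset.induction_on with
  | empty => simp
  | @insert a A ha ih =>
    rw [Finset.union_insert]
    by_cases hmem : a ∈ X ∪ A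
    · rw [Finset.insert_eq_self.2 hmem, Finset.card_insert_of_notMem ha]
      push_cast; linarith
    · have hm := marg_ge_neg_one v c hc hv hmem
      rw [Finset.card_insert_of_notMem ha]
      push_cast; linarith

include hsub hv hc in
lemma neg_exact {F : Finset α} [Fintype α] (hF : ∀ o ∉ F, v (insert o F) - v F = -1) :
    ∀ (m : ℕ) (B : Finset α), F ⊆ B → (B \ F).card = m → v B = v F - m := by
  intro m
  induction m with
  | zero =>
    intro B hFB h0
    have he : B \ F = ∅ := Finset.card_eq_zero.1 h0
    have hBF : B ⊆ F := Finset.sdiff_eq_empty_iff_subset.1 he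
    have hBF2 : B = F := Finset.Subset.antisymm hBF hFB
    simp [hBF2]
  | succ m ih =>
    intro B hFB hcard
    have hne : (B \ F).Nonempty := by
      rw [← Finset.card_pos, hcard]; omega
    obtain ⟨o, ho⟩ := hne
    have hoB : o ∈ B := (Finset.mem_sdiff.1 ho).1
    have hoF : o ∉ F := (Finset.mem_sdiff.1 ho).2
    have hFB' : F ⊆ B.erase o := fun x hx =>
      Finset.mem_erase.2 ⟨fun hxo => hoF (hxo ▸ hx), hFB hx⟩
    have hcard' : (B.erase o \ F).card = m := by
      have : B.erase o \ F = (B \ F).erase o := by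
        ext x; simp [Finset.mem_erase, Finset.mem_sdiff]; tauto
      rw [this, Finset.card_erase_of_mem ho, hcard]
      omega
    have hIH := ih (B.erase o) hFB' hcard'
    have hins : insert o (B.erase o) = B := Finset.insert_erase hoB
    have honero : o ∉ B.erase o := Finset.notMem_erase o B
    have hle : v (insert o (B.erase o)) - v (B.erase o) ≤ v (insert o F) - v F :=
      submod' v hsub hFB' honero
    rw [hF o hoF] at hle
    have hge := marg_ge_neg_one v c hc hv honero
    have : v (insert o (B.erase o)) - v (B.erase o) = -1 := le_antisymm hle hge
    rw [hins] at this
    push_cast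
    linarith

include hsub hv hc in
lemma val_int : ∀ S : Finset α, ∃ z : ℤ, v S = z := by
  intro S
  induction S using Finset.induction_on with
  | empty => exact ⟨0, by simpa using hsub.1⟩
  | @insert a A ha ih =>
    obtain ⟨z, hz⟩ := ih
    rcases marg_cases v c hc hv ha with h | h | h
    · exact ⟨z - 1, by push_cast; linarith⟩
    · exact ⟨z, by linarith⟩
    · exact ⟨z + c, by push_cast; linarith⟩

include hsub hv hc in
lemma shed_one : ∀ (m : ℕ) (S : Finset α), S.card ≤ m → v S < 0 →
    ∃ o ∈ S, v (S.erase o) = v S + 1 := by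
  intro m
  induction m with
  | zero =>
    intro S hS hv0
    have : S = ∅ := Finset.card_eq_zero.1 (Nat.le_zero.1 hS)
    rw [this, hsub.1] at hv0; linarith
  | succ m ih =>
    intro S hS hv0
    have hne : S.Nonempty := by
      by_contra h
      rw [Finset.not_nonempty_iff_eq_empty.1 h, hsub.1] at hv0; linarith
    obtain ⟨o, ho⟩ := hne
    have honero : o ∉ S.erase o := Finset.notMem_erase o S
    have hins : insert o (S.erase o) = S := Finset.insert_erase ho
    rcases marg_cases v c hc hv honero with h | h | h
    · exact ⟨o, ho, by rw [hins] at h; linarith⟩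
    · have hlt : v (S.erase o) < 0 := by rw [hins] at h; linarith
      have hcard : (S.erase o).card ≤ m := by
        rw [Finset.card_erase_of_mem ho]; omega
      obtain ⟨o', ho', hval⟩ := ih (S.erase o) hcard hlt
      have ho'S : o' ∈ S := Finset.mem_of_mem_erase ho'
      refine ⟨o', ho'S, ?_⟩
      have hcomm : (S.erase o).erase o' = (S.erase o').erase o := Finset.erase_right_comm
      have hsub2 : (S.erase o').erase o ⊆ S.erase o' := Finset.erase_subset o (S.erase o')
      have ho'not : o' ∉ S.erase o' := Finset.notMem_erase o' S
      have ho'not2 : o' ∉ (S.erase o').erase o := fun h => ho'not (Finset.mem_of_mem_erase h)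
      have hle : v (insert o' (S.erase o')) - v (S.erase o') ≤
          v (insert o' ((S.erase o').erase o)) - v ((S.erase o').erase o) :=
        submod' v hsub hsub2 ho'not
      have hm1 : v (insert o' ((S.erase o').erase o)) - v ((S.erase o').erase o) = -1 := by
        have hins2 : insert o' ((S.erase o).erase o') = S.erase o :=
          Finset.insert_erase ho'
        rw [← hcomm, hins2]
        linarith
      rw [hm1] at hle
      have hge := marg_ge_neg_one v c hc hv ho'not
      have : v (insert o' (S.erase o')) - v (S.erase o') = -1 := le_antisymm hle hge
      rw [Finset.insert_erase ho'S] at this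
      linarith
    · have hlt : v (S.erase o) < 0 := by
        rw [hins] at h
        have : (0:ℝ) ≤ c := by positivity
        linarith
      have hcard : (S.erase o).card ≤ m := by
        rw [Finset.card_erase_of_mem ho]; omega
      obtain ⟨o', ho', hval⟩ := ih (S.erase o) hcard hlt
      have ho'S : o' ∈ S := Finset.mem_of_mem_erase ho'
      refine ⟨o', ho'S, ?_⟩
      have hcomm : (S.erase o).erase o' = (S.erase o').erase o := Finset.erase_right_comm
      have hsub2 : (S.erase o').erase o ⊆ S.erase o' := Finset.erase_subset o (S.erase o')
      have ho'not : o' ∉ S.erase o' := Finset.notMem_erase o' S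
      have hle : v (insert o' (S.erase o')) - v (S.erase o') ≤
          v (insert o' ((S.erase o').erase o)) - v ((S.erase o').erase o) :=
        submod' v hsub hsub2 ho'not
      have hm1 : v (insert o' ((S.erase o').erase o)) - v ((S.erase o').erase o) = -1 := by
        have hins2 : insert o' ((S.erase o).erase o') = S.erase o :=
          Finset.insert_erase ho'
        rw [← hcomm, hins2]
        linarith
      rw [hm1] at hle
      have hge := marg_ge_neg_one v c hc hv ho'not
      have : v (insert o' (S.erase o')) - v (S.erase o') = -1 := le_antisymm hle hge
      rw [Finset.insert_erase ho'S] at this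
      linarith

include hsub hv hc in
lemma shed_many : ∀ (k : ℕ) (S : Finset α), v S + k ≤ 0 →
    ∃ T ⊆ S, T.card + k = S.card ∧ v T = v S + k := by
  intro k
  induction k with
  | zero => intro S _; exact ⟨S, Finset.Subset.refl S, by simp, by simp⟩
  | succ k ih =>
    intro S hS
    have hlt : v S < 0 := by push_cast at hS; linarith
    obtain ⟨o, ho, hval⟩ := shed_one v c hsub hc hv S.card S le_rfl hlt
    have hcond : v (S.erase o) + k ≤ 0 := by rw [hval]; push_cast at hS ⊢; linarith
    obtain ⟨T, hT, hcard, hvT⟩ := ih (S.erase o) hcond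
    refine ⟨T, hT.trans (Finset.erase_subset o S), ?_, ?_⟩
    · rw [Finset.card_erase_of_mem ho] at hcard
      have : 1 ≤ S.card := Finset.card_pos.2 ⟨o, ho⟩
      omega
    · rw [hvT, hval]; push_cast; ring

end ValLemmas
section ValLemmas2

variable {α : Type*} [DecidableEq α] (v : Finset α → ℝ) (c : ℕ)
variable (hsub : Submodular v) (hc : 0 < c)
variable (hv : ∀ (S : Finset α) (o : α), o ∉ S →
      v (insert o S) - v S ∈ ({-1, 0, (c : ℝ)} : Set ℝ))

/-- `W` is a set of universally-`c` items inside `S`. -/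
def UCset (v : Finset α → ℝ) (c : ℕ) (W S : Finset α) : Prop :=
  ∀ w ∈ W, ∀ T ⊆ S.erase w, v (insert w T) - v T = c

lemma UCset_mono {W S S' : Finset α} (h : UCset v c W S) (hS : S' ⊆ S) (hW : W ⊆ S') :
    UCset v c W S' := by
  intro w hw T hT
  exact h w hw T (hT.trans (Finset.erase_subset_erase w hS))

lemma uc_rem : ∀ (D W X : Finset α), UCset v c W X → D ⊆ W → W ⊆ X →
    v (X \ D) = v X - c * D.card := by
  intro D
  induction D using Finset.induction_on with
  | empty => intro W X _ _ _; simp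
  | @insert d D hd ih =>
    intro W X hUC hDW hWX
    have hdW : d ∈ W := hDW (Finset.mem_insert_self d D)
    have hdX : d ∈ X := hWX hdW
    have hdXD : d ∈ X \ D := Finset.mem_sdiff.2 ⟨hdX, hd⟩
    have hsd : X \ insert d D = (X \ D).erase d := by
      ext x; simp [Finset.mem_sdiff, Finset.mem_erase]; tauto
    have hTsub : (X \ D).erase d ⊆ X.erase d :=
      Finset.erase_subset_erase d (Finset.sdiff_subset)
    have hval : v (insert d ((X \ D).erase d)) - v ((X \ D).erase d) = c :=
      hUC d hdW _ hTsub
    rw [Finset.insert_erase hdXD] at hval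
    have hIH := ih W X hUC ((Finset.subset_insert d D).trans hDW) hWX
    rw [hsd, Finset.card_insert_of_notMem hd]
    push_cast
    linarith

include hsub hc hv in
lemma shed_star : ∀ (k : ℕ) (W S : Finset α), UCset v c W S → W ⊆ S →
    v S + k ≤ c * W.card →
    ∃ T, W ⊆ T ∧ T ⊆ S ∧ T.card + k = S.card ∧ v T = v S + k := by
  intro k
  induction k with
  | zero => intro W S _ _ _; exact ⟨S, by assumption, Finset.Subset.refl S, by simp, by simp⟩
  | succ k ih =>
    intro W S hUC hWS hcond
    have hrem : v (S \ W) = v S - c * W.card := uc_rem v c W W S hUC (le_refl W) hWS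
    have hneg : v (S \ W) < 0 := by push_cast at hcond; linarith
    obtain ⟨o, ho, hval⟩ := shed_one v c hsub hc hv (S \ W).card _ le_rfl hneg
    have hoS : o ∈ S := (Finset.mem_sdiff.1 ho).1
    have hoW : o ∉ W := (Finset.mem_sdiff.1 ho).2
    -- v (S.erase o) = v S + 1
    have honero : o ∉ S.erase o := Finset.notMem_erase o S
    have hsub2 : (S \ W).erase o ⊆ S.erase o :=
      Finset.erase_subset_erase o (Finset.sdiff_subset)
    have ho2 : o ∉ (S \ W).erase o := Finset.notMem_erase _ _
    have hle : v (insert o (S.erase o)) - v (S.erase o) ≤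
        v (insert o ((S \ W).erase o)) - v ((S \ W).erase o) :=
      submod' v hsub hsub2 honero
    rw [Finset.insert_erase ho] at hle
    have hm1 : v (S \ W) - v ((S \ W).erase o) = -1 := by linarith
    rw [hm1, Finset.insert_erase hoS] at hle
    have hge := marg_ge_neg_one v c hc hv honero
    have hSe : v (S.erase o) = v S + 1 := by
      rw [Finset.insert_erase hoS] at hge; linarith
    have hUC' : UCset v c W (S.erase o) := by
      refine UCset_mono v c hUC (Finset.erase_subset o S) ?_
      intro w hw
      exact Finset.mem_erase.2 ⟨fun h => hoW (h ▸ hw), hWS hw⟩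
    have hWS' : W ⊆ S.erase o := fun w hw =>
      Finset.mem_erase.2 ⟨fun h => hoW (h ▸ hw), hWS hw⟩
    have hcond' : v (S.erase o) + k ≤ c * W.card := by
      rw [hSe]; push_cast at hcond ⊢; linarith
    obtain ⟨T, hWT, hTS, hcard, hvT⟩ := ih W (S.erase o) hUC' hWS' hcond'
    refine ⟨T, hWT, hTS.trans (Finset.erase_subset o S), ?_, ?_⟩
    · rw [Finset.card_erase_of_mem hoS] at hcard
      have : 1 ≤ S.card := Finset.card_pos.2 ⟨o, hoS⟩
      omega
    · rw [hvT, hSe]; push_cast; ring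

end ValLemmas2
section ValLemmas3

variable {α : Type*} [Fintype α] [DecidableEq α] (v : Finset α → ℝ) (c : ℕ)
variable (hsub : Submodular v) (hc : 0 < c)
variable (hv : ∀ (S : Finset α) (o : α), o ∉ S →
      v (insert o S) - v S ∈ ({-1, 0, (c : ℝ)} : Set ℝ))

include hsub hc hv in
lemma exists_F (X : Finset α) :
    ∃ F E : Finset α, X ⊆ F ∧ E ⊆ F ∧ (∀ e ∈ E, e ∉ X) ∧
      (∀ e ∈ E, v (insert e X) - v X = c) ∧
      (∀ A, A ⊆ F → (∀ a ∈ A, a ∉ X) → v X + c * (A ∩ E).card ≤ v (X ∪ A)) ∧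
      v F = v X + c * E.card ∧ (∀ o ∉ F, v (insert o F) - v F = -1) := by
  suffices H : ∀ (fuel : ℕ) (S E : Finset α), X ⊆ S → E ⊆ S → (∀ e ∈ E, e ∉ X) →
      (∀ e ∈ E, v (insert e X) - v X = c) →
      (∀ A, A ⊆ S → (∀ a ∈ A, a ∉ X) → v X + c * (A ∩ E).card ≤ v (X ∪ A)) →
      v S = v X + c * E.card → (Finset.univ \ S).card ≤ fuel →
      ∃ F E' : Finset α, X ⊆ F ∧ E' ⊆ F ∧ (∀ e ∈ E', e ∉ X) ∧
        (∀ e ∈ E', v (insert e X) - v X = c) ∧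
        (∀ A, A ⊆ F → (∀ a ∈ A, a ∉ X) → v X + c * (A ∩ E').card ≤ v (X ∪ A)) ∧
        v F = v X + c * E'.card ∧ (∀ o ∉ F, v (insert o F) - v F = -1) by
    refine H (Finset.univ \ X).card X ∅ (le_refl X) (Finset.empty_subset X)
      (by simp) (by simp) ?_ (by simp) le_rfl
    intro A hA hAX
    have : A = ∅ := by
      rw [Finset.eq_empty_iff_forall_notMem]
      exact fun a ha => hAX a ha (hA ha)
    simp [this]
  intro fuel
  induction fuel with
  | zero =>
    intro S E hXS hES hEX hEc hABS hvS hfuel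
    refine ⟨S, E, hXS, hES, hEX, hEc, hABS, hvS, ?_⟩
    intro o hoS
    exfalso
    have : o ∈ Finset.univ \ S := Finset.mem_sdiff.2 ⟨Finset.mem_univ o, hoS⟩
    have : 0 < (Finset.univ \ S).card := Finset.card_pos.2 ⟨o, this⟩
    omega
  | succ fuel ih =>
    intro S E hXS hES hEX hEc hABS hvS hfuel
    by_cases hex : ∃ o, o ∉ S ∧ 0 ≤ v (insert o S) - v S
    · obtain ⟨o, hoS, hom⟩ := hex
      have hfuel' : (Finset.univ \ insert o S).card ≤ fuel := by
        have h1 : Finset.univ \ insert o S = (Finset.univ \ S).erase o := by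
          ext x
          simp only [Finset.mem_sdiff, Finset.mem_insert, Finset.mem_erase, Finset.mem_univ,
            true_and]
          tauto
        have h2 : o ∈ Finset.univ \ S := Finset.mem_sdiff.2 ⟨Finset.mem_univ o, hoS⟩
        rw [h1, Finset.card_erase_of_mem h2]
        have : 0 < (Finset.univ \ S).card := Finset.card_pos.2 ⟨o, h2⟩
        omega
      have hoX : o ∉ X := fun h => hoS (hXS h)
      have hoE : o ∉ E := fun h => hoS (hES h)
      rcases marg_cases v c hc hv hoS with hm | hm | hm
      · linarith
      · -- zero marginal: add o to S, keep E
        refine ih (insert o S) E (hXS.trans (Finset.subset_insert o S))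
          (hES.trans (Finset.subset_insert o S)) hEX hEc ?_ (by linarith) hfuel'
        intro A hA hAX
        by_cases hoA : o ∈ A
        · have hAe : A.erase o ⊆ S := by
            intro x hx
            have hxA := Finset.mem_of_mem_erase hx
            have hxo := (Finset.mem_erase.1 hx).1
            rcases Finset.mem_insert.1 (hA hxA) with h | h
            · exact absurd h hxo
            · exact h
          have hAXe : ∀ a ∈ A.erase o, a ∉ X := fun a ha => hAX a (Finset.mem_of_mem_erase ha)
          have hIH := hABS (A.erase o) hAe hAXe
          have hXA : X ∪ A = insert o (X ∪ A.erase o) := by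
            ext x
            simp only [Finset.mem_union, Finset.mem_insert, Finset.mem_erase]
            constructor
            · rintro (h | h)
              · exact Or.inr (Or.inl h)
              · by_cases hxo : x = o
                · exact Or.inl hxo
                · exact Or.inr (Or.inr ⟨hxo, h⟩)
            · rintro (h | h | h)
              · exact Or.inr (h ▸ hoA)
              · exact Or.inl h
              · exact Or.inr h.2
          have hsubS : X ∪ A.erase o ⊆ S := Finset.union_subset hXS hAe
          have hoU : o ∉ X ∪ A.erase o := by
            simp only [Finset.mem_union, Finset.mem_erase]
            rintro (h | h)
            · exact hoX h
            · exact h.1 rfl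
          have hmono : v (insert o S) - v S ≤ v (insert o (X ∪ A.erase o)) - v (X ∪ A.erase o) :=
            submod' v hsub hsubS hoS
          have hAE : A ∩ E = A.erase o ∩ E := by
            ext x
            simp only [Finset.mem_inter, Finset.mem_erase]
            constructor
            · rintro ⟨h1, h2⟩; exact ⟨⟨fun hxo => hoE (hxo ▸ h2), h1⟩, h2⟩
            · rintro ⟨⟨_, h1⟩, h2⟩; exact ⟨h1, h2⟩
          rw [hXA, hAE]
          linarith
        · have hAe : A ⊆ S := by
            intro x hx
            rcases Finset.mem_insert.1 (hA hx) with h | h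
            · exact absurd (h ▸ hx) hoA
            · exact h
          exact hABS A hAe hAX
      · -- c marginal: add o to S and to E
        have hoc : v (insert o X) - v X = c := marg_eq_c_of_subset v c hsub hc hv hXS hoS hm
        refine ih (insert o S) (insert o E) (hXS.trans (Finset.subset_insert o S))
          (Finset.insert_subset_insert o hES) ?_ ?_ ?_ ?_ hfuel'
        · intro e he
          rcases Finset.mem_insert.1 he with h | h
          · exact h ▸ hoX
          · exact hEX e h
        · intro e he
          rcases Finset.mem_insert.1 he with h | h
          · exact h ▸ hoc
          · exact hEc e h
        · intro A hA hAX
          by_cases hoA : o ∈ A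
          · have hAe : A.erase o ⊆ S := by
              intro x hx
              have hxA := Finset.mem_of_mem_erase hx
              have hxo := (Finset.mem_erase.1 hx).1
              rcases Finset.mem_insert.1 (hA hxA) with h | h
              · exact absurd h hxo
              · exact h
            have hAXe : ∀ a ∈ A.erase o, a ∉ X := fun a ha => hAX a (Finset.mem_of_mem_erase ha)
            have hIH := hABS (A.erase o) hAe hAXe
            have hXA : X ∪ A = insert o (X ∪ A.erase o) := by
              ext x
              simp only [Finset.mem_union, Finset.mem_insert, Finset.mem_erase]
              constructor
              · rintro (h | h)
                · exact Or.inr (Or.inl h)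
                · by_cases hxo : x = o
                  · exact Or.inl hxo
                  · exact Or.inr (Or.inr ⟨hxo, h⟩)
              · rintro (h | h | h)
                · exact Or.inr (h ▸ hoA)
                · exact Or.inl h
                · exact Or.inr h.2
            have hsubS : X ∪ A.erase o ⊆ S := Finset.union_subset hXS hAe
            have hoU : o ∉ X ∪ A.erase o := by
              simp only [Finset.mem_union, Finset.mem_erase]
              rintro (h | h)
              · exact hoX h
              · exact h.1 rfl
            have hoc2 : v (insert o (X ∪ A.erase o)) - v (X ∪ A.erase o) = c :=
              marg_eq_c_of_subset v c hsub hc hv hsubS hoS hm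
            have hAE : A ∩ insert o E = insert o (A.erase o ∩ E) := by
              ext x
              simp only [Finset.mem_inter, Finset.mem_insert, Finset.mem_erase]
              constructor
              · rintro ⟨h1, h2 | h2⟩
                · exact Or.inl h2
                · by_cases hxo : x = o
                  · exact Or.inl hxo
                  · exact Or.inr ⟨⟨hxo, h1⟩, h2⟩
              · rintro (h | ⟨⟨hxo, h1⟩, h2⟩)
                · exact ⟨h ▸ hoA, Or.inl h⟩
                · exact ⟨h1, Or.inr h2⟩
            have hcard : (A ∩ insert o E).card = (A.erase o ∩ E).card + 1 := by
              rw [hAE]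
              refine Finset.card_insert_of_notMem ?_
              simp only [Finset.mem_inter, Finset.mem_erase]
              rintro ⟨⟨h, _⟩, _⟩
              exact h rfl
            rw [hXA, hcard]
            push_cast
            linarith
          · have hAe : A ⊆ S := by
              intro x hx
              rcases Finset.mem_insert.1 (hA hx) with h | h
              · exact absurd (h ▸ hx) hoA
              · exact h
            have hAE : A ∩ insert o E = A ∩ E := by
              ext x
              simp only [Finset.mem_inter, Finset.mem_insert]
              constructor
              · rintro ⟨h1, h2 | h2⟩
                · exact absurd (h2 ▸ h1) hoA
                · exact ⟨h1, h2⟩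
              · rintro ⟨h1, h2⟩; exact ⟨h1, Or.inr h2⟩
            rw [hAE]
            exact hABS A hAe hAX
        · rw [Finset.card_insert_of_notMem hoE]
          push_cast
          linarith
    · push_neg at hex
      refine ⟨S, E, hXS, hES, hEX, hEc, hABS, hvS, ?_⟩
      intro o hoS
      have hlt := hex o hoS
      rcases marg_cases v c hc hv hoS with hm | hm | hm
      · exact hm
      · linarith
      · exfalso
        have : (0:ℝ) < c := by exact_mod_cast hc
        linarith

end ValLemmas3
set_option linter.unusedSectionVars false

section LexLemmas

/-- Count of entries `≤ x` in a list of reals. -/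
noncomputable def cntR (L : List ℝ) (x : ℝ) : ℕ := (L.filter (fun y => decide (y ≤ x))).length

lemma cntR_cons (a : ℝ) (L : List ℝ) (x : ℝ) :
    cntR (a :: L) x = cntR L x + (if a ≤ x then 1 else 0) := by
  unfold cntR
  rw [List.filter_cons]
  by_cases h : a ≤ x <;> simp [h]

lemma cntR_eq_zero {L : List ℝ} {x : ℝ} (h : ∀ y ∈ L, ¬ y ≤ x) : cntR L x = 0 := by
  unfold cntR
  rw [List.filter_eq_nil_iff.2 (by intro y hy; simpa using h y hy)]
  rfl

lemma cntR_pos_elim {L : List ℝ} {x : ℝ} (h : 0 < cntR L x) : ∃ y ∈ L, y ≤ x := by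
  unfold cntR at h
  rw [List.length_pos_iff_exists_mem] at h
  obtain ⟨y, hy⟩ := h
  have := List.of_mem_filter hy
  exact ⟨y, List.mem_of_mem_filter hy, by simpa using this⟩

lemma lexlist (t : ℝ) : ∀ (L L' : List ℝ), L.Pairwise (· ≤ ·) → L'.Pairwise (· ≤ ·) →
    L.length = L'.length →
    (∀ x : ℝ, x ≤ t → cntR L' x ≤ cntR L x) → cntR L' t < cntR L t →
    List.Lex (· < ·) L L' := by
  intro L
  induction L with
  | nil =>
    intro L' _ _ _ _ hstrict
    exfalso
    have : cntR ([] : List ℝ) t = 0 := cntR_eq_zero (by simp)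
    omega
  | cons a L₂ ih =>
    intro L' hL hL' hlen hcnt hstrict
    match L' with
    | [] => simp at hlen
    | a' :: L₂' =>
      rcases lt_trichotomy a a' with hlt | heq | hgt
      · exact List.Lex.rel hlt
      · subst heq
        refine List.Lex.cons ?_
        refine ih L₂' (List.pairwise_cons.1 hL).2 (List.pairwise_cons.1 hL').2
          (by simpa using hlen) ?_ ?_
        · intro x hx
          have := hcnt x hx
          rw [cntR_cons, cntR_cons] at this
          omega
        · have := hstrict
          rw [cntR_cons, cntR_cons] at this
          omega
      · exfalso
        by_cases hat : a' ≤ t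
        · have h1 := hcnt a' hat
          have h2 : 0 < cntR (a' :: L₂') a' := by
            rw [cntR_cons]; simp
          have h3 : cntR (a :: L₂) a' = 0 := by
            refine cntR_eq_zero ?_
            intro y hy
            rcases List.mem_cons.1 hy with h | h
            · subst h; intro hya; linarith
            · have hay := (List.pairwise_cons.1 hL).1 y h
              intro hya; linarith
          omega
        · push_neg at hat
          have h0 : cntR (a' :: L₂') t = 0 := by
            refine cntR_eq_zero ?_
            intro y hy
            rcases List.mem_cons.1 hy with h | h
            · subst h; exact not_le.2 hat
            · have ha'y := (List.pairwise_cons.1 hL').1 y h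
              intro hyt; linarith
          rw [h0] at hstrict
          obtain ⟨y, hy, hyt⟩ := cntR_pos_elim hstrict
          rcases List.mem_cons.1 hy with h | h
          · subst h; linarith
          · have hay := (List.pairwise_cons.1 hL).1 y h
            linarith

end LexLemmas

section Bridge

variable {α : Type*} [Fintype α] [DecidableEq α] {n : ℕ}

noncomputable def sUtilA (v : Fin n → Finset α → ℝ) (X : Fin n → Finset α) : List ℝ :=
  Multiset.sort (Multiset.map (fun i => v i (X i)) Finset.univ.val) (· ≤ ·)

lemma cnt_sUtilA (v : Fin n → Finset α → ℝ) (X : Fin n → Finset α) (x : ℝ) :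
    cntR (sUtilA v X) x = (Finset.univ.filter (fun j => v j (X j) ≤ x)).card := by
  classical
  unfold cntR sUtilA
  have h1 : ((Multiset.sort (Multiset.map (fun i => v i (X i)) Finset.univ.val) (· ≤ ·) :
      List ℝ) : Multiset ℝ) = Multiset.map (fun i => v i (X i)) Finset.univ.val :=
    Multiset.sort_eq ..
  have h2 : ∀ (L : List ℝ), (L.filter (fun y => decide (y ≤ x))).length =
      Multiset.countP (fun y => y ≤ x) (L : Multiset ℝ) := by
    intro L
    simp [Multiset.coe_countP, List.countP_eq_length_filter]
  rw [h2, h1, Multiset.countP_map]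
  rfl

lemma length_sUtilA (v : Fin n → Finset α → ℝ) (X : Fin n → Finset α) :
    (sUtilA v X).length = n := by
  unfold sUtilA
  rw [Multiset.length_sort, Multiset.card_map]
  simp

lemma sorted_sUtilA (v : Fin n → Finset α → ℝ) (X : Fin n → Finset α) :
    (sUtilA v X).Pairwise (· ≤ ·) := Multiset.pairwise_sort ..

lemma lexB (v : Fin n → Finset α → ℝ) (X Y : Fin n → Finset α) (t : ℝ)
    (h1 : ∀ j, t < v j (Y j) ∨ v j (X j) ≤ v j (Y j))
    (h2 : ∃ j, v j (X j) ≤ t ∧ t < v j (Y j)) :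
    List.Lex (· < ·) (sUtilA v X) (sUtilA v Y) := by
  classical
  refine lexlist t _ _ (sorted_sUtilA v X) (sorted_sUtilA v Y)
    (by rw [length_sUtilA, length_sUtilA]) ?_ ?_
  · intro x hx
    rw [cnt_sUtilA, cnt_sUtilA]
    refine Finset.card_le_card ?_
    intro j hj
    simp only [Finset.mem_filter, Finset.mem_univ, true_and] at hj ⊢
    rcases h1 j with h | h
    · exfalso; exact absurd (le_trans hj hx) (not_le.2 h)
    · exact le_trans h hj
  · rw [cnt_sUtilA, cnt_sUtilA]
    obtain ⟨j₀, hj₀1, hj₀2⟩ := h2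
    refine Finset.card_lt_card ?_
    rw [Finset.ssubset_iff_of_subset ?_]
    · exact ⟨j₀, by simp [hj₀1], by simp [not_le.2 hj₀2]⟩
    · intro j hj
      simp only [Finset.mem_filter, Finset.mem_univ, true_and] at hj ⊢
      rcases h1 j with h | h
      · exfalso; exact absurd (le_trans hj (le_refl t)) (not_le.2 h)
      · exact le_trans h hj

end Bridge
section Partition

variable {α : Type*} [DecidableEq α] {n : ℕ}

lemma partition_among : ∀ (J : Finset (Fin n)) (R : Finset α) (K : ℕ),
    R.card ≤ J.card * K →
    ∃ P : Fin n → Finset α, (∀ j, P j ⊆ R) ∧ (∀ j ∉ J, P j = ∅) ∧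
      (∀ j, (P j).card ≤ K) ∧ (∀ j k, j ≠ k → Disjoint (P j) (P k)) ∧
      J.biUnion P = R := by
  intro J
  induction J using Finset.induction_on with
  | empty =>
    intro R K hR
    simp only [Finset.card_empty, Nat.zero_mul, Nat.le_zero, Finset.card_eq_zero] at hR
    exact ⟨fun _ => ∅, fun _ => Finset.empty_subset R, fun _ _ => rfl,
      fun _ => by simp, fun _ _ _ => by simp, by simp [hR]⟩
  | @insert j J hj ih =>
    intro R K hR
    obtain ⟨R₁, hR₁sub, hR₁card⟩ := Finset.exists_subset_card_eq
      (show min K R.card ≤ R.card from min_le_right _ _)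
    have hrest : (R \ R₁).card ≤ J.card * K := by
      rw [Finset.card_sdiff_of_subset hR₁sub, hR₁card]
      rw [Finset.card_insert_of_notMem hj] at hR
      rcases Nat.le_total K R.card with h | h
      · rw [min_eq_left h]
        calc R.card - K ≤ (J.card + 1) * K - K := by omega
        _ = J.card * K := by ring_nf; omega
      · rw [min_eq_right h]; omega
    obtain ⟨P, hPsub, hPout, hPcard, hPdisj, hPcover⟩ := ih (R \ R₁) K hrest
    refine ⟨fun k => if k = j then R₁ else P k, ?_, ?_, ?_, ?_, ?_⟩
    · intro k
      by_cases h : k = j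
      · simp [h, hR₁sub]
      · simp only [h, if_false]
        exact (hPsub k).trans (Finset.sdiff_subset)
    · intro k hk
      have hkj : k ≠ j := fun h => hk (h ▸ Finset.mem_insert_self j J)
      have hkJ : k ∉ J := fun h => hk (Finset.mem_insert_of_mem h)
      simp [hkj, hPout k hkJ]
    · intro k
      by_cases h : k = j
      · simp only [h, if_true]
        rw [hR₁card]; exact min_le_left _ _
      · simp only [h, if_false]; exact hPcard k
    · intro k l hkl
      by_cases hk : k = j <;> by_cases hl : l = j
      · exact absurd (hk.trans hl.symm) hkl
      · simp only [hk, hl, if_true, if_false]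
        have := hPsub l
        exact Finset.disjoint_left.2 fun a ha hal =>
          (Finset.mem_sdiff.1 (this hal)).2 ha
      · simp only [hk, hl, if_true, if_false]
        have := hPsub k
        exact Finset.disjoint_left.2 fun a ha hal =>
          (Finset.mem_sdiff.1 (this ha)).2 hal
      · simp only [hk, hl, if_false]
        exact hPdisj k l hkl
    · rw [Finset.biUnion_insert]
      simp only [if_true]
      have : J.biUnion (fun k => if k = j then R₁ else P k) = J.biUnion P := by
        refine Finset.biUnion_congr rfl ?_
        intro k hk
        have : k ≠ j := fun h => hj (h ▸ hk)
        simp [this]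
      rw [this, hPcover]
      ext x
      simp only [Finset.mem_union, Finset.mem_sdiff]
      constructor
      · rintro (h | h)
        · exact hR₁sub h
        · exact h.1
      · intro hx
        by_cases h : x ∈ R₁
        · exact Or.inl h
        · exact Or.inr ⟨hx, h⟩

end Partition
section MainAux

variable {α : Type*} [Fintype α] [DecidableEq α] {n : ℕ}

lemma sUtil_lex (v : Fin n → Finset α → ℝ) (X Y : Fin n → Finset α) (t : ℝ)
    (h1 : ∀ j, t < v j (Y j) ∨ v j (X j) ≤ v j (Y j))
    (h2 : ∃ j, v j (X j) ≤ t ∧ t < v j (Y j)) :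
    List.Lex (· < ·) (sUtil v X) (sUtil v Y) := by
  have e1 : sUtil v X = sUtilA v X := rfl
  have e2 : sUtil v Y = sUtilA v Y := rfl
  rw [e1, e2]
  exact lexB v X Y t h1 h2

/-- If a single-item transfer to `i` gains `c` for `i`, then in a leximin allocation the
loser must drop strictly below its old value and to at most `v i (X i)`. -/
lemma blocked_grab (c : ℕ) (hc : 0 < c) (v : Fin n → Finset α → ℝ)
    (hv : ∀ i (S : Finset α) (o : α), o ∉ S →
      v i (insert o S) - v i S ∈ ({-1, 0, (c : ℝ)} : Set ℝ))
    (X : Fin n → Finset α) (hlex : Leximin v X) (i h : Fin n) (hih : h ≠ i)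
    (e : α) (he : e ∈ X h) (hei : e ∉ X i)
    (hgain : v i (insert e (X i)) - v i (X i) = c) :
    v h (X h) - v h ((X h).erase e) = c ∧ v h ((X h).erase e) ≤ v i (X i) := by
  classical
  set Y : Fin n → Finset α := fun j => if j = i then insert e (X i) else (X j).erase e with hY
  have hYi : Y i = insert e (X i) := by simp [hY]
  have hYh : Y h = (X h).erase e := by simp [hY, hih]
  have hYother : ∀ j, j ≠ i → j ≠ h → Y j = X j := by
    intro j hji hjh
    have hej : e ∉ X j := by
      have := hlex.1.1 j h hjh
      exact fun hmem => (Finset.disjoint_left.1 this hmem) he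
    simp [hY, hji, Finset.erase_eq_of_notMem hej]
  have hcomp : CompleteAlloc Y := by
    constructor
    · intro j k hjk
      rw [Finset.disjoint_left]
      intro a haj hak
      by_cases hji : j = i <;> by_cases hki : k = i
      · exact hjk (hji.trans hki.symm)
      · subst hji
        rw [hYi] at haj
        simp only [hY, if_neg hki] at hak
        rcases Finset.mem_insert.1 haj with h1 | h1
        · subst h1
          have : a ∈ X k := Finset.mem_of_mem_erase hak
          by_cases hkh : k = h
          · subst hkh; exact (Finset.notMem_erase a (X k)) hak
          · exact (Finset.disjoint_left.1 (hlex.1.1 k h hkh) this) he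
        · have : a ∈ X k := Finset.mem_of_mem_erase hak
          exact (Finset.disjoint_left.1 (hlex.1.1 j k (Ne.symm hki)) h1) this
      · subst hki
        rw [hYi] at hak
        simp only [hY, if_neg hji] at haj
        rcases Finset.mem_insert.1 hak with h1 | h1
        · subst h1
          by_cases hjh : j = h
          · subst hjh; exact (Finset.notMem_erase a (X j)) haj
          · exact (Finset.disjoint_left.1 (hlex.1.1 j h hjh) (Finset.mem_of_mem_erase haj)) he
        · exact (Finset.disjoint_left.1 (hlex.1.1 k j (Ne.symm hji)) h1)
            (Finset.mem_of_mem_erase haj)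
      · simp only [hY, if_neg hji, if_neg hki] at haj hak
        exact (Finset.disjoint_left.1 (hlex.1.1 j k hjk) (Finset.mem_of_mem_erase haj))
          (Finset.mem_of_mem_erase hak)
    · apply Finset.Subset.antisymm (Finset.subset_univ _)
      intro a _
      by_cases hae : a = e
      · subst hae
        exact Finset.mem_biUnion.2 ⟨i, Finset.mem_univ i, by rw [hYi]; exact Finset.mem_insert_self _ _⟩
      · have : a ∈ Finset.univ.biUnion X := by rw [hlex.1.2]; exact Finset.mem_univ a
        obtain ⟨j, _, haj⟩ := Finset.mem_biUnion.1 this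
        refine Finset.mem_biUnion.2 ⟨j, Finset.mem_univ j, ?_⟩
        by_cases hji : j = i
        · subst hji; rw [hYi]; exact Finset.mem_insert_of_mem haj
        · simp only [hY, if_neg hji]
          exact Finset.mem_erase.2 ⟨hae, haj⟩
  constructor
  · -- the marginal of e for h is c
    have hlt : v h ((X h).erase e) < v h (X h) := by
      by_contra hge
      push_neg at hge
      refine hlex.2 Y hcomp (sUtil_lex v X Y (v i (X i)) ?_ ?_)
      · intro j
        by_cases hji : j = i
        · subst hji; left; rw [hYi]; linarith [hc, hgain,
            show (0:ℝ) < c from by exact_mod_cast hc]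
        · by_cases hjh : j = h
          · subst hjh; right; rw [hYh]; exact hge
          · right; rw [hYother j hji hjh]
      · exact ⟨i, le_refl _, by rw [hYi]; linarith [show (0:ℝ) < c from by exact_mod_cast hc]⟩
    have hene : e ∉ (X h).erase e := Finset.notMem_erase e (X h)
    have hins : insert e ((X h).erase e) = X h := Finset.insert_erase he
    rcases marg_cases (v h) c hc (hv h) hene with hm | hm | hm <;> rw [hins] at hm
    · linarith
    · linarith
    · linarith
  · -- the loser drops to at most v i (X i)
    by_contra hgt
    push_neg at hgt
    refine hlex.2 Y hcomp (sUtil_lex v X Y (v i (X i)) ?_ ?_)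
    · intro j
      by_cases hji : j = i
      · subst hji; left; rw [hYi]; linarith [show (0:ℝ) < c from by exact_mod_cast hc]
      · by_cases hjh : j = h
        · subst hjh; left; rw [hYh]; exact hgt
        · right; rw [hYother j hji hjh]
    · exact ⟨i, le_refl _, by rw [hYi]; linarith [show (0:ℝ) < c from by exact_mod_cast hc]⟩

end MainAux

/-- with `{-1, 0, c}`-ONSUB valuations, every leximin allocation is
PROP1. -/
theorem leximin_is_PROP1 {α : Type*} [Fintype α] [DecidableEq α]
    (n : ℕ) (hn : 0 < n) (c : ℕ) (hc : 0 < c) (v : Fin n → Finset α → ℝ)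
    (hsub : ∀ i, Submodular (v i)) (hon : ∀ i, OrderNeutral (v i))
    (hvals : ∀ i (S : Finset α) (o : α), o ∉ S →
      v i (insert o S) - v i S ∈ ({-1, 0, (c : ℝ)} : Set ℝ))
    (X : Fin n → Finset α) (hlex : Leximin v X) :
    ∀ i : Fin n,
      v i (X i) ≥ v i Finset.univ / n ∨
      (∃ o ∉ X i, v i (insert o (X i)) ≥ v i Finset.univ / n) ∨
      (∃ o ∈ X i, v i ((X i).erase o) ≥ v i Finset.univ / n) := by
  classical
  have hv := hvals
  intro i
  by_contra hcon
  push_neg at hcon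
  obtain ⟨F1, F2, F3⟩ := hcon
  have hnR : (0:ℝ) < n := by exact_mod_cast hn
  have hcR : (0:ℝ) < c := by exact_mod_cast hc
  -- the case of a single agent
  by_cases hn1 : n = 1
  · subst hn1
    have huniv : (Finset.univ : Finset (Fin 1)) = {i} := by
      ext j
      have hj : j = i := Subsingleton.elim j i
      simp only [hj, Finset.mem_univ, Finset.mem_singleton, true_iff]
    have hXi : X i = Finset.univ := by
      have h2 := hlex.1.2
      rw [huniv, Finset.singleton_biUnion] at h2
      exact h2
    rw [hXi] at F1
    norm_num at F1
  have hn2 : 2 ≤ n := by omega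
  -- integer values
  have hzall : ∀ (j : Fin n) (S : Finset α), ∃ z : ℤ, v j S = z :=
    fun j S => val_int (v j) c (hsub j) hc (hv j) S
  choose zf hzf using hzall
  have F1' : v i (X i) * n < v i Finset.univ := (lt_div_iff₀ hnR).1 F1
  set uzi : ℤ := zf i (X i) with huzi_def
  set vzO : ℤ := zf i Finset.univ with hvzO_def
  have hui : v i (X i) = (uzi : ℝ) := hzf i (X i)
  have hvO : v i Finset.univ = (vzO : ℝ) := hzf i Finset.univ
  set J : Finset (Fin n) := Finset.univ.erase i with hJ_def
  have hJcard : J.card = n - 1 := by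
    rw [hJ_def, Finset.card_erase_of_mem (Finset.mem_univ i), Finset.card_univ,
      Fintype.card_fin]
  by_cases hsign : (0:ℝ) ≤ v i (X i)
  · -- goods case
    obtain ⟨F, E, hXF, hEF, hEX, hEc, hABS, hvF, hFmax⟩ :=
      exists_F (v i) c (hsub i) hc (hv i) (X i)
    have huzi0 : 0 ≤ uzi := by
      have h1 : (0:ℝ) ≤ (uzi:ℝ) := hui ▸ hsign
      exact_mod_cast h1
    set q : ℕ := (Finset.univ \ F).card with hq_def
    have hq : v i Finset.univ = v i F - q :=
      neg_exact (v i) c (hsub i) hc (hv i) hFmax q Finset.univ (Finset.subset_univ F) rfl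
    by_cases hE : E = ∅
    · rw [hE] at hvF
      simp only [Finset.card_empty, Nat.cast_zero, mul_zero, add_zero] at hvF
      have h1 : v i (X i) * 1 ≤ v i (X i) * n := by
        apply mul_le_mul_of_nonneg_left _ hsign
        exact_mod_cast hn
      have hqnn : (0:ℝ) ≤ q := by positivity
      rw [hq, hvF] at F1'
      linarith
    · obtain ⟨e₀, he₀⟩ := Finset.nonempty_iff_ne_empty.2 hE
      have hstep : v i (X i) + c < v i Finset.univ / n := by
        have h2 := F2 e₀ (hEX e₀ he₀)
        have h3 := hEc e₀ he₀
        linarith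
      have hZmain : (n:ℤ) * (uzi + c) + 1 ≤ vzO := by
        have h1 : (v i (X i) + c) * n < v i Finset.univ := (lt_div_iff₀ hnR).1 hstep
        rw [hui, hvO] at h1
        have h2 : ((n:ℤ) * (uzi + c) : ℝ) < (vzO : ℝ) := by push_cast; linarith
        have h3 : (n:ℤ) * (uzi + c) < vzO := by exact_mod_cast h2
        omega
      have hczpos : (0:ℤ) < (c:ℤ) := by exact_mod_cast hc
      -- per-agent kept bundles
      have hPer : ∀ h : Fin n, ∃ T D : Finset α,
          T ⊆ X h ∧ D ⊆ E ∩ X h ∧ Disjoint D T ∧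
          ((min (zf h (X h)) (uzi + 1) : ℤ) : ℝ) ≤ v h T ∧
          (c:ℤ) * (E ∩ X h).card ≤ (c:ℤ) * D.card + uzi + c := by
        intro h
        by_cases hEh : E ∩ X h = ∅
        · refine ⟨X h, ∅, Finset.Subset.refl _, Finset.empty_subset _,
            Finset.disjoint_left.2 (fun a ha => absurd ha (Finset.notMem_empty a)), ?_, ?_⟩
          · have h1 : min (zf h (X h)) (uzi + 1) ≤ zf h (X h) := min_le_left _ _
            have h2 : ((min (zf h (X h)) (uzi + 1) : ℤ) : ℝ) ≤ ((zf h (X h) : ℤ) : ℝ) := by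
              exact_mod_cast h1
            rw [← hzf h (X h)] at h2
            exact h2
          · rw [hEh]
            simp only [Finset.card_empty, Nat.cast_zero, mul_zero, zero_add]
            have : (0:ℤ) ≤ (c:ℤ) * 0 := by simp
            omega
        · have hhi : h ≠ i := by
            intro hhh
            subst hhh
            obtain ⟨e, he⟩ := Finset.nonempty_iff_ne_empty.2 hEh
            exact hEX e (Finset.mem_of_mem_inter_left he) (Finset.mem_of_mem_inter_right he)
          have hbg : ∀ e ∈ E ∩ X h,
              v h (X h) - v h ((X h).erase e) = c ∧ v h ((X h).erase e) ≤ v i (X i) := by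
            intro e he
            have he1 := Finset.mem_of_mem_inter_left he
            have he2 := Finset.mem_of_mem_inter_right he
            exact blocked_grab c hc v hv X hlex i h hhi e he2 (hEX e he1) (hEc e he1)
          have hUC : UCset (v h) c (E ∩ X h) (X h) := by
            intro w hw T hT
            have h1 := (hbg w hw).1
            have hwX : w ∈ X h := Finset.mem_of_mem_inter_right hw
            have h2 : v h (insert w ((X h).erase w)) - v h ((X h).erase w) = c := by
              rw [Finset.insert_erase hwX]; linarith
            exact marg_eq_c_of_subset (v h) c (hsub h) hc (hv h) hT
              (Finset.notMem_erase w (X h)) h2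
          obtain ⟨e₁, he₁⟩ := Finset.nonempty_iff_ne_empty.2 hEh
          have hUB : zf h (X h) ≤ uzi + c := by
            have h1 := (hbg e₁ he₁).1
            have h2 := (hbg e₁ he₁).2
            have h3 : v h (X h) ≤ v i (X i) + c := by linarith
            rw [hui, hzf h (X h)] at h3
            have h4 : ((zf h (X h) : ℤ) : ℝ) ≤ ((uzi + c : ℤ) : ℝ) := by push_cast; linarith
            exact_mod_cast h4
          set uzh : ℤ := zf h (X h) with huzh
          set τ : ℤ := min uzh (uzi + 1) with hτ
          set m : ℕ := (E ∩ X h).card with hm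
          set qh : ℤ := (c:ℤ) * m - τ with hqh
          set Δ : ℕ := min m ((qh / c).toNat) with hΔ
          have hΔle : Δ ≤ m := min_le_left _ _
          obtain ⟨D, hDsub, hDcard⟩ := Finset.exists_subset_card_eq (s := E ∩ X h) (n := Δ) (by omega)
          have hrem : v h (X h \ D) = v h (X h) - c * D.card :=
            uc_rem (v h) c D (E ∩ X h) (X h) hUC hDsub Finset.inter_subset_right
          have hτuzh : τ ≤ uzh := min_le_left _ _
          have hτui : τ ≤ uzi + 1 := min_le_right _ _
          have hTH : (c:ℤ) * m ≤ (c:ℤ) * Δ + uzi + c := by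
            rcases Nat.lt_or_ge ((qh / c).toNat) m with hlt | hge
            · have hΔeq : Δ = (qh / c).toNat := by omega
              by_cases hq0 : 0 ≤ qh
              · have hdiv0 : 0 ≤ qh / c := Int.ediv_nonneg hq0 (le_of_lt hczpos)
                have hΔz : (Δ:ℤ) = qh / c := by
                  rw [hΔeq]; exact Int.toNat_of_nonneg hdiv0
                have hmax : qh < (qh / c + 1) * c :=
                  Int.lt_ediv_add_one_mul_self qh hczpos
                rw [← hΔz] at hmax
                nlinarith
              · push_neg at hq0
                have hd : qh / c ≤ 0 := by
                  by_contra hdc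
                  push_neg at hdc
                  have h10 := Int.mul_ediv_add_emod qh c
                  have h11 := Int.emod_nonneg qh (ne_of_gt hczpos)
                  nlinarith
                have hΔ0 : Δ = 0 := by
                  have : (qh / c).toNat = 0 := Int.toNat_of_nonpos hd
                  omega
                rw [hΔ0]
                have h5 : (c:ℤ) * m < τ := by linarith
                have h6 : (1:ℤ) ≤ c := hczpos
                push_cast
                omega
            · have hΔeq : Δ = m := by omega
              rw [hΔeq]
              have h6 : (0:ℤ) ≤ c := le_of_lt hczpos
              omega
          by_cases hk0 : (c:ℤ) * Δ ≤ uzh - τ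
          · refine ⟨X h \ D, D, Finset.sdiff_subset, hDsub, ?_, ?_, ?_⟩
            · exact Finset.disjoint_left.2 fun a ha haT => (Finset.mem_sdiff.1 haT).2 ha
            · rw [hrem, hzf h (X h), hDcard]
              have h7 : ((τ:ℤ):ℝ) ≤ ((uzh - c * Δ : ℤ):ℝ) := by exact_mod_cast (by omega : τ ≤ uzh - (c:ℤ)*Δ)
              push_cast at h7 ⊢
              convert h7 using 2
            · rw [hDcard]; exact hTH
          · push_neg at hk0
            have hΔpos : 0 < Δ := by
              by_contra h0
              push_neg at h0
              have hΔ0 : Δ = 0 := by omega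
              rw [hΔ0] at hk0
              simp at hk0
              omega
            have hΔtn : Δ ≤ (qh / c).toNat := min_le_right _ _
            have hq0 : 0 < qh / c := by
              by_contra hcon2
              push_neg at hcon2
              have : (qh / c).toNat = 0 := Int.toNat_of_nonpos hcon2
              omega
            have hΔz : (Δ:ℤ) ≤ qh / c := by
              have h8 : ((qh / c).toNat : ℤ) = qh / c := Int.toNat_of_nonneg (le_of_lt hq0)
              have h9 : (Δ:ℤ) ≤ ((qh / c).toNat : ℤ) := by exact_mod_cast hΔtn
              omega
            have hcq : (c:ℤ) * Δ ≤ qh := by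
              have h10 := Int.mul_ediv_add_emod qh c
              have h11 := Int.emod_nonneg qh (ne_of_gt hczpos)
              nlinarith
            set kk : ℕ := ((c:ℤ) * Δ - (uzh - τ)).toNat with hkk
            have hkkz : (kk:ℤ) = (c:ℤ) * Δ - (uzh - τ) := Int.toNat_of_nonneg (by omega)
            have hUC' : UCset (v h) c ((E ∩ X h) \ D) (X h \ D) := by
              intro w hw T hT
              have hw1 := Finset.mem_sdiff.1 hw
              refine hUC w hw1.1 T (hT.trans ?_)
              exact Finset.erase_subset_erase w Finset.sdiff_subset
            have hWS : (E ∩ X h) \ D ⊆ X h \ D := by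
              intro w hw
              have hw1 := Finset.mem_sdiff.1 hw
              exact Finset.mem_sdiff.2 ⟨Finset.mem_of_mem_inter_right hw1.1, hw1.2⟩
            have hWcard : (((E ∩ X h) \ D).card : ℤ) = (m:ℤ) - Δ := by
              rw [Finset.card_sdiff_of_subset hDsub, hDcard, ← hm]
              have : Δ ≤ m := hΔle
              push_cast [Nat.cast_sub this]
              ring
            have hcond : v h (X h \ D) + kk ≤ (c:ℝ) * ((E ∩ X h) \ D).card := by
              rw [hrem, hzf h (X h), hDcard]
              have hZ : uzh - (c:ℤ) * Δ + kk ≤ (c:ℤ) * (((E ∩ X h) \ D).card) := by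
                rw [hWcard, hkkz]
                have : τ ≤ (c:ℤ) * m - (c:ℤ) * Δ := by omega
                nlinarith
              have hZr : ((uzh - (c:ℤ) * Δ + kk : ℤ):ℝ) ≤ (((c:ℤ) * (((E ∩ X h) \ D).card) : ℤ):ℝ) := by
                exact_mod_cast hZ
              push_cast at hZr ⊢
              linarith
            obtain ⟨T, hWT, hTS, hTcard, hvT⟩ :=
              shed_star (v h) c (hsub h) hc (hv h) kk ((E ∩ X h) \ D) (X h \ D) hUC' hWS hcond
            refine ⟨T, D, hTS.trans Finset.sdiff_subset, hDsub, ?_, ?_, ?_⟩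
            · exact Finset.disjoint_left.2 fun a ha haT => (Finset.mem_sdiff.1 (hTS haT)).2 ha
            · rw [hvT, hrem, hzf h (X h), hDcard]
              have hZ2 : τ ≤ uzh - (c:ℤ) * Δ + kk := by omega
              have hZ2r : ((τ:ℤ):ℝ) ≤ ((uzh - (c:ℤ) * Δ + kk : ℤ):ℝ) := by exact_mod_cast hZ2
              push_cast at hZ2r ⊢
              linarith
            · rw [hDcard]; exact hTH
      choose Tf Df hTD1 hTD2 hTD3 hTD4 hTD5 using hPer
      set A : Finset α := J.biUnion (fun h => X h \ Tf h) with hA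
      have hAmem : ∀ a, a ∈ A ↔ ∃ h, h ≠ i ∧ a ∈ X h ∧ a ∉ Tf h := by
        intro a
        rw [hA, Finset.mem_biUnion]
        constructor
        · rintro ⟨h, hhJ, ha⟩
          have := Finset.mem_sdiff.1 ha
          exact ⟨h, Finset.ne_of_mem_erase hhJ, this.1, this.2⟩
        · rintro ⟨h, hhi, ha1, ha2⟩
          exact ⟨h, Finset.mem_erase.2 ⟨hhi, Finset.mem_univ h⟩, Finset.mem_sdiff.2 ⟨ha1, ha2⟩⟩
      have hAXi : ∀ a ∈ A, a ∉ X i := by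
        intro a ha
        obtain ⟨h, hhi, ha1, _⟩ := (hAmem a).1 ha
        exact fun hmem => (Finset.disjoint_left.1 (hlex.1.1 h i hhi) ha1) hmem
      set Y : Fin n → Finset α := fun j => if j = i then X i ∪ A else X j \ A with hY
      have hYJ : ∀ j, j ≠ i → Y j = Tf j := by
        intro j hji
        simp only [hY, if_neg hji]
        apply Finset.Subset.antisymm
        · intro x hx
          obtain ⟨hx1, hx2⟩ := Finset.mem_sdiff.1 hx
          by_contra hxT
          exact hx2 ((hAmem x).2 ⟨j, hji, hx1, hxT⟩)
        · intro x hx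
          refine Finset.mem_sdiff.2 ⟨hTD1 j hx, ?_⟩
          intro hxA
          obtain ⟨h, hhi, hx1, hx2⟩ := (hAmem x).1 hxA
          by_cases hhj : h = j
          · subst hhj; exact hx2 hx
          · exact (Finset.disjoint_left.1 (hlex.1.1 h j hhj) hx1) (hTD1 j hx)
      have hcomp : CompleteAlloc Y := by
        constructor
        · intro j k hjk
          rw [Finset.disjoint_left]
          intro a haj hak
          by_cases hji : j = i <;> by_cases hki : k = i
          · exact hjk (hji.trans hki.symm)
          · subst hji
            simp only [hY, if_pos rfl, if_neg hki] at haj hak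
            obtain ⟨hak1, hak2⟩ := Finset.mem_sdiff.1 hak
            rcases Finset.mem_union.1 haj with h1 | h1
            · exact (Finset.disjoint_left.1 (hlex.1.1 j k (Ne.symm hki)) h1) hak1
            · exact hak2 h1
          · subst hki
            simp only [hY, if_pos rfl, if_neg hji] at haj hak
            obtain ⟨haj1, haj2⟩ := Finset.mem_sdiff.1 haj
            rcases Finset.mem_union.1 hak with h1 | h1
            · exact (Finset.disjoint_left.1 (hlex.1.1 k j (Ne.symm hji)) h1) haj1
            · exact haj2 h1
          · simp only [hY, if_neg hji, if_neg hki] at haj hak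
            exact (Finset.disjoint_left.1 (hlex.1.1 j k hjk) (Finset.mem_sdiff.1 haj).1)
              (Finset.mem_sdiff.1 hak).1
        · refine Finset.Subset.antisymm (Finset.subset_univ _) ?_
          intro a _
          have : a ∈ Finset.univ.biUnion X := by rw [hlex.1.2]; exact Finset.mem_univ a
          obtain ⟨j, _, haj⟩ := Finset.mem_biUnion.1 this
          by_cases haA : a ∈ A
          · exact Finset.mem_biUnion.2 ⟨i, Finset.mem_univ i,
              by simp only [hY, if_pos rfl]; exact Finset.mem_union_right _ haA⟩
          · by_cases hji : j = i
            · subst hji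
              exact Finset.mem_biUnion.2 ⟨j, Finset.mem_univ j,
                by simp only [hY, if_pos rfl]; exact Finset.mem_union_left _ haj⟩
            · exact Finset.mem_biUnion.2 ⟨j, Finset.mem_univ j,
                by simp only [hY, if_neg hji]; exact Finset.mem_sdiff.2 ⟨haj, haA⟩⟩
      -- value of agent i under Y
      have hdisjXX : ∀ h ∈ J, ∀ k ∈ J, h ≠ k → Disjoint (Df h) (Df k) := by
        intro h _ k _ hhk
        have h1 : Df h ⊆ X h := (hTD2 h).trans Finset.inter_subset_right
        have h2 : Df k ⊆ X k := (hTD2 k).trans Finset.inter_subset_right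
        exact Finset.disjoint_of_subset_left h1 (Finset.disjoint_of_subset_right h2
          (hlex.1.1 h k hhk))
      have hsumD : (J.biUnion Df).card = ∑ h ∈ J, (Df h).card :=
        Finset.card_biUnion hdisjXX
      have hDA : J.biUnion Df ⊆ (A ∩ F) ∩ E := by
        intro a ha
        obtain ⟨h, hhJ, haD⟩ := Finset.mem_biUnion.1 ha
        have hhi : h ≠ i := Finset.ne_of_mem_erase hhJ
        have haEX : a ∈ E ∩ X h := hTD2 h haD
        have haE : a ∈ E := Finset.mem_of_mem_inter_left haEX
        have haXh : a ∈ X h := Finset.mem_of_mem_inter_right haEX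
        have haTf : a ∉ Tf h := fun hmem => (Finset.disjoint_left.1 (hTD3 h) haD) hmem
        have haA : a ∈ A := (hAmem a).2 ⟨h, hhi, haXh, haTf⟩
        exact Finset.mem_inter.2 ⟨Finset.mem_inter.2 ⟨haA, hEF haE⟩, haE⟩
      have hsle : ∑ h ∈ J, (Df h).card ≤ ((A ∩ F) ∩ E).card := by
        rw [← hsumD]; exact Finset.card_le_card hDA
      have hvYi : v i (X i) + (c:ℝ) * (∑ h ∈ J, (Df h).card) - q ≤ v i (X i ∪ A) := by
        have hA1 : v i (X i) + (c:ℝ) * (((A ∩ F) ∩ E).card) ≤ v i (X i ∪ (A ∩ F)) := by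
          refine hABS (A ∩ F) Finset.inter_subset_right ?_
          intro a ha
          exact hAXi a (Finset.mem_of_mem_inter_left ha)
        have hA2 : v i (X i ∪ (A ∩ F)) - ((A \ F).card : ℝ) ≤
            v i ((X i ∪ (A ∩ F)) ∪ (A \ F)) :=
          neg_absorb (v i) c hc (hv i) _ _
        have hAeq : (X i ∪ (A ∩ F)) ∪ (A \ F) = X i ∪ A := by
          ext x
          simp only [Finset.mem_union, Finset.mem_inter, Finset.mem_sdiff]
          tauto
        have hA2q : ((A \ F).card : ℝ) ≤ q := by
          have : A \ F ⊆ Finset.univ \ F := by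
            intro x hx
            exact Finset.mem_sdiff.2 ⟨Finset.mem_univ x, (Finset.mem_sdiff.1 hx).2⟩
          exact_mod_cast Finset.card_le_card this
        have hcle : (c:ℝ) * (∑ h ∈ J, (Df h).card) ≤ (c:ℝ) * (((A ∩ F) ∩ E).card) := by
          apply mul_le_mul_of_nonneg_left _ (le_of_lt hcR)
          exact_mod_cast hsle
        rw [hAeq] at hA2
        linarith
      -- integer accounting
      have hEsum : ∑ h ∈ J, (E ∩ X h).card = E.card := by
        have hEcover : E = J.biUnion (fun h => E ∩ X h) := by
          apply Finset.Subset.antisymm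
          · intro e he
            have : e ∈ Finset.univ.biUnion X := by rw [hlex.1.2]; exact Finset.mem_univ e
            obtain ⟨h, _, heh⟩ := Finset.mem_biUnion.1 this
            have hhi : h ≠ i := fun hhh => hEX e he (hhh ▸ heh)
            exact Finset.mem_biUnion.2 ⟨h, Finset.mem_erase.2 ⟨hhi, Finset.mem_univ h⟩,
              Finset.mem_inter.2 ⟨he, heh⟩⟩
          · intro e he
            obtain ⟨h, _, heh⟩ := Finset.mem_biUnion.1 he
            exact Finset.mem_of_mem_inter_left heh
        have hdisjE : ∀ h ∈ J, ∀ k ∈ J, h ≠ k → Disjoint (E ∩ X h) (E ∩ X k) := by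
          intro h _ k _ hhk
          exact Finset.disjoint_of_subset_left Finset.inter_subset_right
            (Finset.disjoint_of_subset_right Finset.inter_subset_right (hlex.1.1 h k hhk))
        conv_rhs => rw [hEcover]
        exact (Finset.card_biUnion hdisjE).symm
      have hsumTD5 : (c:ℤ) * E.card ≤
          (c:ℤ) * (∑ h ∈ J, (Df h).card) + (J.card : ℤ) * (uzi + c) := by
        have h1 : ∑ h ∈ J, ((c:ℤ) * (E ∩ X h).card) ≤
            ∑ h ∈ J, ((c:ℤ) * (Df h).card + uzi + c) :=
          Finset.sum_le_sum (fun h _ => by linarith [hTD5 h])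
        have h2 : ∑ h ∈ J, ((c:ℤ) * (E ∩ X h).card) = (c:ℤ) * E.card := by
          rw [← Finset.mul_sum]
          congr 1
          rw [← hEsum]
          push_cast
          ring
        have h3 : ∑ h ∈ J, ((c:ℤ) * (Df h).card + uzi + c) =
            (c:ℤ) * (∑ h ∈ J, (Df h).card) + (J.card : ℤ) * (uzi + c) := by
          rw [Finset.sum_add_distrib, Finset.sum_add_distrib, ← Finset.mul_sum]
          simp only [Finset.sum_const, nsmul_eq_mul]
          push_cast
          ring
        rw [h2, h3] at h1
        exact h1
      have hqz : vzO = uzi + (c:ℤ) * E.card - q := by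
        have h1 : (vzO : ℝ) = (uzi:ℝ) + (c:ℝ) * E.card - q := by
          rw [← hvO, ← hui, hq, hvF]
        have h2 : ((uzi + (c:ℤ) * E.card - q : ℤ) : ℝ) = (uzi:ℝ) + (c:ℝ) * E.card - q := by
          push_cast; ring
        rw [← h2] at h1
        exact_mod_cast h1
      have hJz : (J.card : ℤ) = (n:ℤ) - 1 := by
        rw [hJcard]
        push_cast [Nat.cast_sub (by omega : 1 ≤ n)]
        ring
      have hfinal : (q:ℤ) + c + 1 ≤ (c:ℤ) * (∑ h ∈ J, (Df h).card) := by
        rw [hJz] at hsumTD5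
        nlinarith
      -- combine to get the strict improvement for i
      have hstrict : v i (X i) < v i (X i ∪ A) := by
        have h1 : (q:ℝ) + (c:ℝ) + 1 ≤ (c:ℝ) * ((∑ h ∈ J, (Df h).card : ℕ) : ℝ) := by
          exact_mod_cast hfinal
        linarith [hvYi]
      refine hlex.2 Y hcomp (sUtil_lex v X Y (v i (X i)) ?_ ?_)
      · intro j
        by_cases hji : j = i
        · subst hji
          left
          simp only [hY, if_pos rfl]
          exact hstrict
        · rw [hYJ j hji]
          have h4 := hTD4 j
          rcases le_or_gt (zf j (X j)) (uzi + 1) with hmin | hmin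
          · right
            rw [min_eq_left hmin] at h4
            rw [hzf j (X j)]
            exact h4
          · left
            rw [min_eq_right (le_of_lt hmin)] at h4
            have h5 : (uzi:ℝ) < ((uzi + 1 : ℤ):ℝ) := by push_cast; linarith
            rw [hui]
            linarith
      · refine ⟨i, le_refl _, ?_⟩
        simp only [hY, if_pos rfl]
        exact hstrict

  · -- chores case
    push_neg at hsign
    have huzneg : uzi ≤ -1 := by
      have h1 : (uzi : ℝ) < 0 := hui ▸ hsign
      have h2 : uzi < 0 := by exact_mod_cast h1
      omega
    -- there is an item whose removal gains one
    obtain ⟨o₀, ho₀, hvo₀⟩ := shed_one (v i) c (hsub i) hc (hv i) (X i).card (X i) le_rfl hsign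
    have hstep : v i (X i) + 1 < v i Finset.univ / n := by
      have := F3 o₀ ho₀
      linarith [hvo₀]
    have hZmain : (n:ℤ) * (uzi + 1) + 1 ≤ vzO := by
      have h1 : (v i (X i) + 1) * n < v i Finset.univ := (lt_div_iff₀ hnR).1 hstep
      rw [hui, hvO] at h1
      have h2 : ((n:ℤ) * (uzi + 1) : ℝ) < (vzO : ℝ) := by push_cast; linarith
      exact_mod_cast Int.lt_iff_add_one_le.1 (by exact_mod_cast h2)
    by_cases hO : uzi + 1 ≤ vzO
    · -- give everything to agent i
      set Y : Fin n → Finset α := fun j => if j = i then Finset.univ else ∅ with hY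
      have hcomp : CompleteAlloc Y := by
        constructor
        · intro j k hjk
          by_cases hji : j = i <;> by_cases hki : k = i
          · exact absurd (hji.trans hki.symm) hjk
          · simp [hY, hji, hki]
          · simp [hY, hji, hki]
          · simp [hY, hji, hki]
        · refine Finset.Subset.antisymm (Finset.subset_univ _) ?_
          intro a _
          exact Finset.mem_biUnion.2 ⟨i, Finset.mem_univ i, by simp [hY]⟩
      refine hlex.2 Y hcomp (sUtil_lex v X Y (v i (X i)) ?_ ?_)
      · intro j
        by_cases hji : j = i
        · subst hji; left
          simp only [hY, if_true]
          rw [hui, hvO]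
          have : uzi < vzO := by omega
          exact_mod_cast this
        · left
          simp only [hY, if_neg hji]
          rw [(hsub j).1]
          linarith
      · refine ⟨i, le_refl _, ?_⟩
        simp only [hY, if_true]
        rw [hui, hvO]
        have : uzi < vzO := by omega
        exact_mod_cast this
    · push_neg at hO
      have hOle : vzO ≤ uzi := by omega
      set k : ℕ := (uzi + 1 - vzO).toNat with hk_def
      have hkz : (k : ℤ) = uzi + 1 - vzO := Int.toNat_of_nonneg (by omega)
      have hcond : v i Finset.univ + k ≤ 0 := by
        rw [hvO]
        have : ((vzO + k : ℤ) : ℝ) ≤ ((0:ℤ):ℝ) := by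
          exact_mod_cast (show (vzO + (k:ℤ)) ≤ 0 by omega)
        push_cast at this ⊢
        linarith
      obtain ⟨T, hTsub, hTcard, hvT⟩ :=
        shed_many (v i) c (hsub i) hc (hv i) k Finset.univ hcond
      have hvT' : v i T = (uzi : ℝ) + 1 := by
        have hkR : (k:ℝ) = (uzi:ℝ) + 1 - (vzO:ℝ) := by
          have := congrArg (fun z : ℤ => (z : ℝ)) hkz
          push_cast at this
          linarith
        rw [hvT, hvO, hkR]
        ring
      set R : Finset α := Finset.univ \ T with hR_def
      have hRcard : R.card = k := by
        rw [hR_def, Finset.card_sdiff_of_subset hTsub]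
        omega
      set K : ℕ := (-uzi - 1).toNat with hK_def
      have hKz : (K : ℤ) = -uzi - 1 := Int.toNat_of_nonneg (by omega)
      have hRK : R.card ≤ J.card * K := by
        rw [hRcard, hJcard]
        have : ((k : ℤ)) ≤ ((n-1 : ℕ) : ℤ) * K := by
          rw [hkz, hKz]
          have hn1c : ((n-1:ℕ):ℤ) = (n:ℤ) - 1 := by
            push_cast [Nat.cast_sub (by omega : 1 ≤ n)]; ring
          rw [hn1c]
          nlinarith [hZmain]
        exact_mod_cast this
      obtain ⟨P, hPsub, hPout, hPcard, hPdisj, hPcover⟩ := partition_among J R K hRK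
      set Y : Fin n → Finset α := fun j => if j = i then T else P j with hY
      have hcomp : CompleteAlloc Y := by
        constructor
        · intro j k' hjk
          by_cases hji : j = i <;> by_cases hki : k' = i
          · exact absurd (hji.trans hki.symm) hjk
          · simp only [hY, hji, hki, if_true, if_false]
            exact Finset.disjoint_left.2 fun a ha hak =>
              (Finset.mem_sdiff.1 (hPsub k' hak)).2 ha
          · simp only [hY, hji, hki, if_true, if_false]
            exact Finset.disjoint_left.2 fun a ha hak =>
              (Finset.mem_sdiff.1 (hPsub j ha)).2 hak
          · simp only [hY, hji, hki, if_false]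
            exact hPdisj j k' hjk
        · refine Finset.Subset.antisymm (Finset.subset_univ _) ?_
          intro a _
          by_cases haT : a ∈ T
          · exact Finset.mem_biUnion.2 ⟨i, Finset.mem_univ i, by simp [hY, haT]⟩
          · have haR : a ∈ R := Finset.mem_sdiff.2 ⟨Finset.mem_univ a, haT⟩
            rw [← hPcover] at haR
            obtain ⟨j, hjJ, haj⟩ := Finset.mem_biUnion.1 haR
            have hji : j ≠ i := Finset.ne_of_mem_erase hjJ
            exact Finset.mem_biUnion.2 ⟨j, Finset.mem_univ j, by simp [hY, hji, haj]⟩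
      refine hlex.2 Y hcomp (sUtil_lex v X Y (v i (X i)) ?_ ?_)
      · intro j
        by_cases hji : j = i
        · subst hji; left
          simp only [hY, if_true]
          rw [hvT', hui]
          linarith
        · left
          simp only [hY, if_neg hji]
          have h1 : v j ∅ - (P j).card ≤ v j (∅ ∪ P j) :=
            neg_absorb (v j) c hc (hv j) ∅ (P j)
          rw [Finset.empty_union, (hsub j).1] at h1
          have h2 : ((P j).card : ℝ) ≤ K := by exact_mod_cast hPcard j
          have h3 : ((K:ℤ):ℝ) = -(uzi:ℝ) - 1 := by rw [hKz]; push_cast; ring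
          rw [hui]
          have : (K:ℝ) = ((K:ℤ):ℝ) := by push_cast; ring
          linarith
      · refine ⟨i, le_refl _, ?_⟩
        simp only [hY, if_true]
        rw [hvT', hui]
        linarith
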